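/- Let μ₁ > μ₂ ≥ ... ≥ μ_d be real, L + v a real number with (1/d)∑μᵢ < L+v ≤ μ₁. Among all probability vectors λ (decreasingly ordered) with ∑ᵢ μᵢλᵢ = L+v, the minimum of λ₁ is attained by a vector of the form λ₁ = λ₂ = ... = λ_{r−1} ≥ λ_r > 0, λᵢ = 0 for i > r, where r is the unique integer with 1/r ≤ λ₁ < 1/(r−1). -/

import Mathlib

private lemma sum_ite_lt_const (d k : ℕ) (hk : k ≤ d) (x : ℝ) :
    ∑ i : Fin d, (if (i : ℕ) < k then x else 0) = k * x := by
  rw [Fin.sum_univ_eq_sum_range (fun j => if j < k then x else 0) d]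
  rw [← Finset.sum_filter]
  have h : (Finset.range d).filter (· < k) = Finset.range k := by
    ext j; simp [Finset.mem_filter, Finset.mem_range]; omega
  rw [h, Finset.sum_const, Finset.card_range, nsmul_eq_mul]

private lemma sum_ite_eq_single (d k : ℕ) (hk : k < d) (f : Fin d → ℝ) :
    ∑ i : Fin d, (if (i : ℕ) = k then f i else 0) = f ⟨k, hk⟩ := by
  have h : ∀ i : Fin d, (if (i : ℕ) = k then f i else 0) = (if i = ⟨k, hk⟩ then f i else 0) := by
    intro i; simp [Fin.ext_iff]
  rw [Finset.sum_congr rfl (fun i _ => h i)]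
  simp

private lemma sum_ite_succ_eq (d k : ℕ) (hk : k < d) (f : Fin d → ℝ) :
    ∑ i : Fin d, (if (i : ℕ) < k + 1 then f i else 0)
      = (∑ i : Fin d, (if (i : ℕ) < k then f i else 0)) + f ⟨k, hk⟩ := by
  have h : ∀ i : Fin d, (if (i : ℕ) < k + 1 then f i else 0)
      = (if (i : ℕ) < k then f i else 0) + (if (i : ℕ) = k then f i else 0) := by
    intro i
    by_cases h1 : (i : ℕ) < k
    · have h3 : (i : ℕ) ≠ k := by omega
      simp [h1, h3, Nat.lt_succ_of_lt h1]
    · by_cases h2 : (i : ℕ) = k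
      · simp [h1, h2]
      · have h3 : ¬ ((i : ℕ) < k + 1) := by omega
        simp [h1, h2, h3]
  rw [Finset.sum_congr rfl (fun i _ => h i), Finset.sum_add_distrib,
    sum_ite_eq_single d k hk f]

private lemma aux_main
    (d : ℕ) (hd : 2 ≤ d) (μ : Fin d → ℝ) (hμ : Antitone μ)
    (hμ12 : μ ⟨1, lt_of_lt_of_le one_lt_two hd⟩ < μ ⟨0, lt_of_lt_of_le two_pos hd⟩)
    (c : ℝ) (r : ℕ) (hr1 : 1 ≤ r) (hrd : r ≤ d) (t : ℝ)
    (hlo : 1 ≤ (r : ℝ) * t)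
    (hhi : ((r : ℝ) - 1) * t < 1)
    (ht1 : r = 1 → t = 1)
    (hsum : t * (∑ i : Fin d, if (i : ℕ) < r - 1 then μ i else 0)
        + (1 - ((r : ℝ) - 1) * t) * μ ⟨r - 1, by omega⟩ = c) :
    ∃ (lam : Fin d → ℝ) (r' : ℕ),
      (Antitone lam ∧ (∀ i, 0 ≤ lam i) ∧ (∑ i, lam i = 1) ∧
        (∑ i, μ i * lam i = c)) ∧
      (∀ lam' : Fin d → ℝ, Antitone lam' → (∀ i, 0 ≤ lam' i) →
        (∑ i, lam' i = 1) → (∑ i, μ i * lam' i = c) →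
        lam ⟨0, lt_of_lt_of_le two_pos hd⟩ ≤ lam' ⟨0, lt_of_lt_of_le two_pos hd⟩) ∧
      1 ≤ r' ∧ r' ≤ d ∧
      (∀ i : Fin d, (i : ℕ) < r' - 1 → lam i = lam ⟨0, lt_of_lt_of_le two_pos hd⟩) ∧
      (∀ i : Fin d, (i : ℕ) = r' - 1 → 0 < lam i ∧ lam i ≤ lam ⟨0, lt_of_lt_of_le two_pos hd⟩) ∧
      (∀ i : Fin d, r' ≤ (i : ℕ) → lam i = 0) ∧
      1 / (r' : ℝ) ≤ lam ⟨0, lt_of_lt_of_le two_pos hd⟩ ∧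
      (1 < r' → lam ⟨0, lt_of_lt_of_le two_pos hd⟩ < 1 / ((r' : ℝ) - 1)) := by
  have hmd : r - 1 < d := by omega
  have h0d : 0 < d := by omega
  have h1d : 1 < d := by omega
  have h01 : μ ⟨1, h1d⟩ < μ ⟨0, h0d⟩ := hμ12
  have hr0 : (0 : ℝ) < (r : ℝ) := by exact_mod_cast hr1
  have hrR : (1 : ℝ) ≤ (r : ℝ) := by exact_mod_cast hr1
  have hcastm : ((r - 1 : ℕ) : ℝ) = (r : ℝ) - 1 := by
    push_cast [Nat.cast_sub hr1]; ring
  have htpos : 0 < t := by nlinarith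
  have htm : 0 < 1 - ((r : ℝ) - 1) * t := by linarith
  have htmle : 1 - ((r : ℝ) - 1) * t ≤ t := by nlinarith
  set lam : Fin d → ℝ := fun i =>
    if (i : ℕ) < r - 1 then t else if (i : ℕ) = r - 1 then 1 - ((r : ℝ) - 1) * t else 0
    with hlam
  have hlam0 : lam ⟨0, lt_of_lt_of_le two_pos hd⟩ = t := by
    by_cases h : 0 < r - 1
    · simp [hlam, h]
    · have hr' : r = 1 := by omega
      simp [hlam, hr', ht1 hr']
  have hnn : ∀ i, 0 ≤ lam i := by
    intro i; simp only [hlam]; split_ifs <;> linarith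
  have hanti : Antitone lam := by
    intro i j hij
    have hij' : (i : ℕ) ≤ (j : ℕ) := hij
    simp only [hlam]
    split_ifs <;> first | linarith | (exfalso; omega)
  have hsum1 : ∑ i, lam i = 1 := by
    have hpt : ∀ i : Fin d, lam i = (if (i : ℕ) < r - 1 then t else 0)
        + (if (i : ℕ) = r - 1 then 1 - ((r : ℝ) - 1) * t else 0) := by
      intro i; simp only [hlam]; split_ifs <;> first | (exfalso; omega) | ring
    rw [Finset.sum_congr rfl (fun i _ => hpt i), Finset.sum_add_distrib,
      sum_ite_lt_const d (r - 1) (by omega) t, sum_ite_eq_single d (r - 1) hmd,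
      hcastm]
    ring
  have hsumc : ∑ i, μ i * lam i = c := by
    have hpt : ∀ i : Fin d, μ i * lam i = t * (if (i : ℕ) < r - 1 then μ i else 0)
        + (if (i : ℕ) = r - 1 then (1 - ((r : ℝ) - 1) * t) * μ i else 0) := by
      intro i; simp only [hlam]; split_ifs <;> first | (exfalso; omega) | ring
    rw [Finset.sum_congr rfl (fun i _ => hpt i), Finset.sum_add_distrib, ← Finset.mul_sum,
      sum_ite_eq_single d (r - 1) hmd]
    exact hsum
  have hopt : ∀ lam' : Fin d → ℝ, Antitone lam' → (∀ i, 0 ≤ lam' i) →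
      (∑ i, lam' i = 1) → (∑ i, μ i * lam' i = c) →
      lam ⟨0, lt_of_lt_of_le two_pos hd⟩ ≤ lam' ⟨0, lt_of_lt_of_le two_pos hd⟩ := by
    intro g hg hgnn hg1 hgc
    rw [hlam0]
    by_contra hcon
    push_neg at hcon
    set t' := g ⟨0, lt_of_lt_of_le two_pos hd⟩ with ht'def
    have hgle : ∀ i : Fin d, g i ≤ t' := by
      intro i
      exact hg (by simp [Fin.le_def])
    by_cases hr2 : r = 1
    · -- r = 1 : c = μ₀ and lam = e₀
      subst hr2
      have hc : c = μ ⟨0, h0d⟩ := by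
        rw [← hsum]
        norm_num
      have ht1' : t = 1 := ht1 rfl
      have hptg : ∀ i : Fin d, μ i * g i
          = (if (i : ℕ) = 0 then μ i * g i else 0) + (if 0 < (i : ℕ) then μ i * g i else 0) := by
        intro i; split_ifs <;> first | (exfalso; omega) | ring
      have hpt1 : ∀ i : Fin d, g i
          = (if (i : ℕ) = 0 then g i else 0) + (if 0 < (i : ℕ) then g i else 0) := by
        intro i; split_ifs <;> first | (exfalso; omega) | ring
      have hA : ∑ i : Fin d, μ i * g i = μ ⟨0, h0d⟩ * t'
          + ∑ i : Fin d, (if 0 < (i : ℕ) then μ i * g i else 0) := by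
        rw [Finset.sum_congr rfl (fun i _ => hptg i), Finset.sum_add_distrib,
          sum_ite_eq_single d 0 h0d]
      have hB : (1 : ℝ) = t' + ∑ i : Fin d, (if 0 < (i : ℕ) then g i else 0) := by
        rw [← hg1, Finset.sum_congr rfl (fun i _ => hpt1 i), Finset.sum_add_distrib,
          sum_ite_eq_single d 0 h0d]
      have hC : ∑ i : Fin d, (if 0 < (i : ℕ) then μ i * g i else 0)
          ≤ μ ⟨1, h1d⟩ * ∑ i : Fin d, (if 0 < (i : ℕ) then g i else 0) := by
        rw [Finset.mul_sum]
        apply Finset.sum_le_sum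
        intro i _
        split_ifs with h
        · exact mul_le_mul_of_nonneg_right (hμ (by simp [Fin.le_def]; omega)) (hgnn i)
        · simp
      have hY : (∑ i : Fin d, (if 0 < (i : ℕ) then g i else 0)) = 1 - t' := by linarith
      rw [hY] at hC
      have hpos : (0 : ℝ) < (μ ⟨0, h0d⟩ - μ ⟨1, h1d⟩) * (1 - t') :=
        mul_pos (by linarith) (by linarith)
      nlinarith [hgc, hA, hC, hpos]
    · -- r ≥ 2
      have hm1 : 1 ≤ r - 1 := by omega
      set mF : Fin d := ⟨r - 1, hmd⟩ with hmF
      set tm := 1 - ((r : ℝ) - 1) * t with htmdef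
      have hgmF : g ⟨0, h0d⟩ = t' := rfl
      have hptg : ∀ i : Fin d, μ i * g i - μ i * lam i
          = (if (i : ℕ) < r - 1 then μ i * (g i - t) else 0)
          + (if (i : ℕ) = r - 1 then μ i * (g i - tm) else 0)
          + (if r - 1 < (i : ℕ) then μ i * g i else 0) := by
        intro i; simp only [hlam]; split_ifs <;> first | (exfalso; omega) | ring
      have hpt1 : ∀ i : Fin d, g i - lam i
          = (if (i : ℕ) < r - 1 then g i - t else 0)
          + (if (i : ℕ) = r - 1 then g i - tm else 0)
          + (if r - 1 < (i : ℕ) then g i else 0) := by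
        intro i; simp only [hlam]; split_ifs <;> first | (exfalso; omega) | ring
      set A := ∑ i : Fin d, (if (i : ℕ) < r - 1 then μ i * (g i - t) else 0) with hA
      set C := ∑ i : Fin d, (if r - 1 < (i : ℕ) then μ i * g i else 0) with hC
      set A2 := ∑ i : Fin d, (if (i : ℕ) < r - 1 then g i - t else 0) with hA2
      set Q := ∑ i : Fin d, (if r - 1 < (i : ℕ) then g i else 0) with hQ
      have hE : (0 : ℝ) = A + μ mF * (g mF - tm) + C := by
        have h0 : ∑ i : Fin d, (μ i * g i - μ i * lam i) = 0 := by
          rw [Finset.sum_sub_distrib, hgc, hsumc]; ring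
        calc (0 : ℝ) = ∑ i : Fin d, (μ i * g i - μ i * lam i) := h0.symm
          _ = A + μ mF * (g mF - tm) + C := by
              rw [Finset.sum_congr rfl (fun i _ => hptg i), Finset.sum_add_distrib,
                Finset.sum_add_distrib, sum_ite_eq_single d (r - 1) hmd]
      have hF : (0 : ℝ) = A2 + (g mF - tm) + Q := by
        have h0 : ∑ i : Fin d, (g i - lam i) = 0 := by
          rw [Finset.sum_sub_distrib, hg1, hsum1]; ring
        calc (0 : ℝ) = ∑ i : Fin d, (g i - lam i) := h0.symm
          _ = A2 + (g mF - tm) + Q := by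
              rw [Finset.sum_congr rfl (fun i _ => hpt1 i), Finset.sum_add_distrib,
                Finset.sum_add_distrib, sum_ite_eq_single d (r - 1) hmd]
      have hCle : C ≤ μ mF * Q := by
        rw [hC, hQ, Finset.mul_sum]
        apply Finset.sum_le_sum
        intro i _
        split_ifs with h
        · exact mul_le_mul_of_nonneg_right (hμ (by simp [hmF, Fin.le_def]; omega)) (hgnn i)
        · simp
      have hmerge : A - μ mF * A2 = ∑ i : Fin d,
          (if (i : ℕ) < r - 1 then (μ i - μ mF) * (g i - t) else 0) := by
        rw [hA, hA2, Finset.mul_sum, ← Finset.sum_sub_distrib]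
        apply Finset.sum_congr rfl
        intro i _
        split_ifs <;> ring
      have hneg : (∑ i : Fin d, (if (i : ℕ) < r - 1 then (μ i - μ mF) * (g i - t) else 0))
          ≤ (μ ⟨0, h0d⟩ - μ ⟨1, h1d⟩) * (t' - t) := by
        have hterm : ∀ i : Fin d, (if (i : ℕ) < r - 1 then (μ i - μ mF) * (g i - t) else 0)
            ≤ (if i = (⟨0, h0d⟩ : Fin d) then (μ ⟨0, h0d⟩ - μ ⟨1, h1d⟩) * (t' - t) else 0) := by
          intro i
          by_cases hi0 : i = (⟨0, h0d⟩ : Fin d)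
          · subst hi0
            have h1 : ((⟨0, h0d⟩ : Fin d) : ℕ) < r - 1 := by simp; omega
            rw [if_pos h1, if_pos rfl]
            have hmond : μ mF ≤ μ ⟨1, h1d⟩ := hμ (by simp [hmF, Fin.le_def]; omega)
            have hmul : μ ⟨0, h0d⟩ - μ ⟨1, h1d⟩ ≤ μ ⟨0, h0d⟩ - μ mF := by linarith
            have hkey := mul_le_mul_of_nonpos_right hmul (by linarith : t' - t ≤ 0)
            calc (μ ⟨0, h0d⟩ - μ mF) * (g ⟨0, h0d⟩ - t)
                = (μ ⟨0, h0d⟩ - μ mF) * (t' - t) := by rw [hgmF]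
              _ ≤ (μ ⟨0, h0d⟩ - μ ⟨1, h1d⟩) * (t' - t) := hkey
          · rw [if_neg hi0]
            split_ifs with h
            · apply mul_nonpos_of_nonneg_of_nonpos
              · have : μ mF ≤ μ i := hμ (by simp [hmF, Fin.le_def]; omega)
                linarith
              · have := hgle i
                linarith
            · exact le_rfl
        calc (∑ i : Fin d, (if (i : ℕ) < r - 1 then (μ i - μ mF) * (g i - t) else 0))
            ≤ ∑ i : Fin d,
                (if i = (⟨0, h0d⟩ : Fin d) then (μ ⟨0, h0d⟩ - μ ⟨1, h1d⟩) * (t' - t) else 0) :=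
              Finset.sum_le_sum (fun i _ => hterm i)
          _ = (μ ⟨0, h0d⟩ - μ ⟨1, h1d⟩) * (t' - t) := by simp
      have hfinal : (μ ⟨0, h0d⟩ - μ ⟨1, h1d⟩) * (t' - t) < 0 :=
        mul_neg_of_pos_of_neg (by linarith) (by linarith)
      have hXQ : μ mF * (g mF - tm) + μ mF * Q = -(μ mF * A2) := by
        have h : (g mF - tm) + Q = -A2 := by linarith
        rw [← mul_add, h]; ring
      linarith
  refine ⟨lam, r, ⟨hanti, hnn, hsum1, hsumc⟩, hopt, hr1, hrd, ?_, ?_, ?_, ?_, ?_⟩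
  · intro i hi
    rw [hlam0]
    simp [hlam, hi]
  · intro i hi
    rw [hlam0]
    have h1 : ¬ ((i : ℕ) < r - 1) := by omega
    simp only [hlam]
    rw [if_neg h1, if_pos hi]
    constructor <;> linarith
  · intro i hi
    have h1 : ¬ ((i : ℕ) < r - 1) := by omega
    have h2 : ¬ ((i : ℕ) = r - 1) := by omega
    simp [hlam, h1, h2]
  · rw [hlam0, div_le_iff₀ hr0]
    linarith
  · intro hr2
    have hposr : (0 : ℝ) < (r : ℝ) - 1 := by
      have : (1 : ℝ) < (r : ℝ) := by exact_mod_cast hr2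
      linarith
    rw [hlam0, lt_div_iff₀ hposr]
    linarith

/-- Lemma 1: among decreasingly ordered probability vectors `λ` with
`∑ μᵢ λᵢ = L + v` (for `μ` decreasing with `μ₁ > μ₂` and
`(1/d)∑μᵢ < L+v ≤ μ₁`), the minimum of `λ₁` is attained by a vector with
`λ₁ = ⋯ = λ_{r-1} ≥ λ_r > 0`, `λᵢ = 0` for `i > r`, where `r` satisfies
`1/r ≤ λ₁ < 1/(r-1)`. -/
theorem min_largest_eigenvalue_fixed_bell_value
    (d : ℕ) (hd : 2 ≤ d) (μ : Fin d → ℝ) (hμ : Antitone μ)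
    (hμ12 : μ ⟨1, by omega⟩ < μ ⟨0, by omega⟩)
    (L v : ℝ)
    (hlow : (1 / (d : ℝ)) * ∑ i, μ i < L + v)
    (hhigh : L + v ≤ μ ⟨0, by omega⟩) :
    ∃ (lam : Fin d → ℝ) (r : ℕ),
      (Antitone lam ∧ (∀ i, 0 ≤ lam i) ∧ (∑ i, lam i = 1) ∧
        (∑ i, μ i * lam i = L + v)) ∧
      (∀ lam' : Fin d → ℝ, Antitone lam' → (∀ i, 0 ≤ lam' i) →
        (∑ i, lam' i = 1) → (∑ i, μ i * lam' i = L + v) →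
        lam ⟨0, by omega⟩ ≤ lam' ⟨0, by omega⟩) ∧
      1 ≤ r ∧ r ≤ d ∧
      (∀ i : Fin d, (i : ℕ) < r - 1 → lam i = lam ⟨0, by omega⟩) ∧
      (∀ i : Fin d, (i : ℕ) = r - 1 → 0 < lam i ∧ lam i ≤ lam ⟨0, by omega⟩) ∧
      (∀ i : Fin d, r ≤ (i : ℕ) → lam i = 0) ∧
      1 / (r : ℝ) ≤ lam ⟨0, by omega⟩ ∧
      (1 < r → lam ⟨0, by omega⟩ < 1 / ((r : ℝ) - 1)) := by
  classical
  have h0d : 0 < d := by omega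
  have h1d : 1 < d := by omega
  have hd0R : (0 : ℝ) < (d : ℝ) := by exact_mod_cast h0d
  have hPd : (∑ i : Fin d, if (i : ℕ) < d then μ i else 0) < (d : ℝ) * (L + v) := by
    have he : (∑ i : Fin d, if (i : ℕ) < d then μ i else 0) = ∑ i, μ i := by
      apply Finset.sum_congr rfl
      intro i _
      rw [if_pos i.is_lt]
    rw [he]
    have h2 := mul_lt_mul_of_pos_left hlow hd0R
    have h3 : (d : ℝ) * ((1 / (d : ℝ)) * ∑ i, μ i) = ∑ i, μ i := by
      field_simp
    rw [h3] at h2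
    exact h2
  have hex : ∃ k : ℕ, (∑ i : Fin d, if (i : ℕ) < k then μ i else 0) < (k : ℝ) * (L + v) :=
    ⟨d, hPd⟩
  set r := Nat.find hex with hrdef
  have hPr : (∑ i : Fin d, if (i : ℕ) < r then μ i else 0) < (r : ℝ) * (L + v) :=
    Nat.find_spec hex
  have hrle : r ≤ d := Nat.find_le hPd
  have h1 : ¬ ((∑ i : Fin d, if (i : ℕ) < 1 then μ i else 0) < ((1 : ℕ) : ℝ) * (L + v)) := by
    have he : (∑ i : Fin d, if (i : ℕ) < 1 then μ i else 0) = μ ⟨0, h0d⟩ := by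
      rw [show (1 : ℕ) = 0 + 1 from rfl, sum_ite_succ_eq d 0 h0d μ]
      simp
    rw [he]
    push_cast
    rw [one_mul]
    exact not_lt.mpr hhigh
  have hr2 : 2 ≤ r := by
    by_contra h
    push_neg at h
    have hcases : r = 0 ∨ r = 1 := by omega
    rcases hcases with h' | h'
    · rw [h'] at hPr; simp at hPr
    · rw [h'] at hPr; exact h1 (by exact_mod_cast hPr)
  have hmd : r - 1 < d := by omega
  have hprev : ((r - 1 : ℕ) : ℝ) * (L + v)
      ≤ ∑ i : Fin d, if (i : ℕ) < r - 1 then μ i else 0 := by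
    have h := Nat.find_min hex (show r - 1 < r by omega)
    push_neg at h
    exact h
  have hcastm : ((r - 1 : ℕ) : ℝ) = (r : ℝ) - 1 := by
    push_cast [Nat.cast_sub (show 1 ≤ r by omega)]; ring
  have hrR : (0 : ℝ) < (r : ℝ) := by exact_mod_cast (show 0 < r by omega)
  have hsplit : (∑ i : Fin d, if (i : ℕ) < r then μ i else 0)
      = (∑ i : Fin d, if (i : ℕ) < r - 1 then μ i else 0) + μ ⟨r - 1, hmd⟩ := by
    have h := sum_ite_succ_eq d (r - 1) hmd μ
    rw [show r - 1 + 1 = r by omega] at h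
    exact h
  have hμm : μ ⟨r - 1, hmd⟩ < L + v := by
    have hterm : (r : ℝ) * μ ⟨r - 1, hmd⟩ ≤ ∑ i : Fin d, (if (i : ℕ) < r then μ i else 0) := by
      rw [← sum_ite_lt_const d r hrle (μ ⟨r - 1, hmd⟩)]
      apply Finset.sum_le_sum
      intro i _
      split_ifs with h
      · exact hμ (by simp [Fin.le_def]; omega)
      · exact le_rfl
    have hlt := lt_of_le_of_lt hterm hPr
    exact lt_of_mul_lt_mul_left (by linarith) (le_of_lt hrR)
  by_cases hcase : ((r - 1 : ℕ) : ℝ) * (L + v)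
      = ∑ i : Fin d, if (i : ℕ) < r - 1 then μ i else 0
  · -- boundary case: uniform on the first r - 1 entries
    have hx : (0 : ℝ) < ((r - 1 : ℕ) : ℝ) := by
      rw [hcastm]
      have : (2 : ℝ) ≤ (r : ℝ) := by exact_mod_cast hr2
      linarith
    refine aux_main d hd μ hμ hμ12 (L + v) (r - 1) (by omega) (by omega)
      (1 / ((r - 1 : ℕ) : ℝ)) ?_ ?_ ?_ ?_
    · rw [mul_one_div, div_self (ne_of_gt hx)]
    · rw [mul_one_div, div_lt_one hx]
      linarith
    · intro h
      rw [h]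
      norm_num
    · have h21 : r - 1 - 1 < d := by omega
      have hstep := sum_ite_succ_eq d (r - 1 - 1) h21 μ
      rw [show r - 1 - 1 + 1 = r - 1 by omega] at hstep
      have h1x : 1 - (((r - 1 : ℕ) : ℝ) - 1) * (1 / ((r - 1 : ℕ) : ℝ))
          = 1 / ((r - 1 : ℕ) : ℝ) := by
        rw [mul_one_div, hcastm]
        have hne : (r : ℝ) - 1 ≠ 0 := by rw [← hcastm]; exact ne_of_gt hx
        field_simp
        ring
      rw [h1x, ← mul_add, ← hstep, ← hcase, ← mul_assoc, one_div,
        inv_mul_cancel₀ (ne_of_gt hx), one_mul]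
  · -- interior case
    have hstrict : ((r - 1 : ℕ) : ℝ) * (L + v)
        < ∑ i : Fin d, if (i : ℕ) < r - 1 then μ i else 0 :=
      lt_of_le_of_ne hprev hcase
    set Sm := ∑ i : Fin d, if (i : ℕ) < r - 1 then μ i else 0 with hSm
    set μm := μ ⟨r - 1, hmd⟩ with hμmdef
    have hr1pos : (0 : ℝ) < (r : ℝ) - 1 := by
      have h2R : (2 : ℝ) ≤ (r : ℝ) := by exact_mod_cast hr2
      linarith
    rw [hcastm] at hstrict
    have hD : (0 : ℝ) < Sm - ((r : ℝ) - 1) * μm := by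
      have h := mul_lt_mul_of_pos_left hμm hr1pos
      linarith
    set t := (L + v - μm) / (Sm - ((r : ℝ) - 1) * μm) with htdef
    have htD : t * (Sm - ((r : ℝ) - 1) * μm) = L + v - μm :=
      div_mul_cancel₀ _ (ne_of_gt hD)
    refine aux_main d hd μ hμ hμ12 (L + v) r (by omega) hrle t ?_ ?_ ?_ ?_
    · rw [htdef, ← mul_div_assoc, le_div_iff₀ hD]
      have h : Sm + μm < (r : ℝ) * (L + v) := by
        rw [← hsplit]; exact hPr
      nlinarith
    · rw [htdef, ← mul_div_assoc, div_lt_one hD]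
      nlinarith
    · intro h; omega
    · rw [← hSm, ← hμmdef]
      linarith [htD]
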